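/- Let Ω ⊆ ℂ be a domain with nonempty boundary and diam(Ω) > 0. Suppose Ω satisfies condition (Δ)_{1,α} for some α > 1: there exist constants ε ∈ (0,1), C > 0 and r₀ > 0 such that for every a ∈ ∂Ω, every r ∈ (0, r₀), every u ∈ F_{a,r}, and every z ∈ Ω with |z − a| = C·r^α, one has u(z) ≤ 1 − ε. Then there exists α′ > α such that ∂Ω satisfies condition (U)_{1,α′}. -/

import Mathlib

open Metric Set
open Complex

lemma circle_mean_holo {f : ℂ → ℂ} {c : ℂ} {R : ℝ} (hR : 0 < R)
    (hf : ∀ x ∈ closedBall c R, DifferentiableAt ℂ f x) :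
    ∫ θ in (0:ℝ)..(2*Real.pi), f (c + R * Complex.exp (θ * Complex.I))
      = 2 * Real.pi * f c := by
  have hcont : ContinuousOn f (closedBall c R) := fun x hx => (hf x hx).continuousAt.continuousWithinAt
  have hcauchy := circleIntegral_sub_inv_smul_of_differentiable_on_off_countable
    (f := f) (s := ∅) countable_empty (mem_ball_self hR) hcont
    (fun x hx => hf x (ball_subset_closedBall hx.1))
  rw [circleIntegral] at hcauchy
  have hint : ∀ θ : ℝ, deriv (circleMap c R) θ • (circleMap c R θ - c)⁻¹ • f (circleMap c R θ)
      = Complex.I * f (circleMap c R θ) := by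
    intro θ
    rw [deriv_circleMap, circleMap_sub_center]
    have h0 : circleMap 0 R θ ≠ 0 := by
      simp [circleMap, Complex.exp_ne_zero, hR.ne']
    field_simp
    ring_nf; rw [mul_inv_cancel_right₀ h0]
  simp only [hint] at hcauchy
  rw [intervalIntegral.integral_const_mul] at hcauchy
  have : (∫ θ in (0:ℝ)..(2*Real.pi), f (circleMap c R θ)) = 2 * Real.pi * f c := by
    apply mul_left_cancel₀ Complex.I_ne_zero
    rw [hcauchy, smul_eq_mul]
    push_cast
    ring
  simpa [circleMap] using this

lemma circle_mean_log_dist {a c : ℂ} {R : ℝ} (hR : 0 < R) (h : R < dist c a) :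
    ∫ θ in (0:ℝ)..(2*Real.pi), Real.log (dist (c + R * Complex.exp (θ * Complex.I)) a)
      = 2 * Real.pi * Real.log (dist c a) := by
  set w : ℂ := c - a with hw
  have hw0 : w ≠ 0 := by
    intro h0
    rw [hw, sub_eq_zero] at h0
    simp [h0] at h; linarith
  have habsw : ‖w‖ = dist c a := by rw [hw, Complex.dist_eq]
  set f : ℂ → ℂ := fun z => Complex.log ((z - a) / w) with hf
  have hdistpos : ∀ x ∈ closedBall c R, 0 < dist x a := by
    intro x hx
    have := dist_triangle c x a
    have hx' : dist c x ≤ R := by rwa [dist_comm, ← mem_closedBall]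
    linarith
  have hmem : ∀ x ∈ closedBall c R, ((x - a) / w) ∈ Complex.slitPlane := by
    intro x hx
    have h1 : ‖(x - a) / w - 1‖ < 1 := by
      have : (x - a) / w - 1 = (x - c) / w := by
        rw [div_sub_one hw0, hw]; congr 1; ring
      rw [this, norm_div, habsw]
      rw [div_lt_one (lt_trans hR h)]
      calc ‖x - c‖ = dist x c := (Complex.dist_eq x c).symm
        _ ≤ R := mem_closedBall.mp hx
        _ < dist c a := h
    rw [Complex.mem_slitPlane_iff]
    left
    have := Complex.abs_re_le_norm ((x - a) / w - 1)
    have h2 : |((x - a) / w).re - 1| < 1 := by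
      calc |((x - a) / w).re - 1| = |((x - a) / w - 1).re| := by simp
        _ ≤ ‖(x - a) / w - 1‖ := Complex.abs_re_le_norm _
        _ < 1 := h1
    have := abs_lt.mp h2
    linarith [this.1]
  have hdiff : ∀ x ∈ closedBall c R, DifferentiableAt ℂ f x := by
    intro x hx
    exact (Complex.differentiableAt_log (hmem x hx)).comp x
      (((differentiableAt_id).sub_const a).div_const w)
  have hre : ∀ x ∈ closedBall c R, (f x).re = Real.log (dist x a) - Real.log (dist c a) := by
    intro x hx
    have hxa : x - a ≠ 0 := by
      intro h0; rw [sub_eq_zero] at h0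
      have := hdistpos x hx; simp [h0] at this
    rw [hf]
    simp only [Complex.log_re, norm_div, habsw]
    rw [Real.log_div (x := ‖x - a‖) (y := dist c a) (by simpa [Complex.dist_eq] using (hdistpos x hx).ne')
      (by simpa [Complex.dist_eq] using (lt_trans hR h).ne')]
    simp [Complex.dist_eq]
  have hmean := circle_mean_holo hR hdiff
  have hptmem : ∀ θ : ℝ, c + (R:ℂ) * Complex.exp (θ * Complex.I) ∈ closedBall c R := by
    intro θ
    simp only [mem_closedBall, Complex.dist_eq, add_sub_cancel_left, map_mul, norm_mul,
      Complex.norm_exp_ofReal_mul_I, mul_one, Complex.norm_real, Real.norm_eq_abs, abs_of_pos hR, le_refl]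
  -- integrability of the complex integrand
  have hcont : Continuous fun θ : ℝ => f (c + (R:ℂ) * Complex.exp (θ * Complex.I)) := by
    apply continuous_iff_continuousAt.mpr
    intro θ
    have hpath : Continuous fun θ : ℝ => c + (R:ℂ) * Complex.exp (θ * Complex.I) := by fun_prop
    exact ContinuousAt.comp (g := f) (f := fun θ : ℝ => c + (R:ℂ) * Complex.exp (θ * Complex.I))
      ((hdiff _ (hptmem θ)).continuousAt) hpath.continuousAt
  have hii : IntervalIntegrable (fun θ : ℝ => f (c + (R:ℂ) * Complex.exp (θ * Complex.I)))
      MeasureTheory.volume 0 (2*Real.pi) := hcont.intervalIntegrable _ _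
  have hre_int := Complex.reCLM.intervalIntegral_comp_comm hii
  -- hre_int : ∫ re ∘ f = re (∫ f)
  have hfc : (f c).re = 0 := by
    rw [hre c (mem_closedBall_self hR.le)]; ring
  have h1 : ∀ θ : ℝ, (f (c + (R:ℂ) * Complex.exp (θ * Complex.I))).re
      = Real.log (dist (c + (R:ℂ) * Complex.exp (θ * Complex.I)) a) - Real.log (dist c a) :=
    fun θ => hre _ (hptmem θ)
  simp only [Complex.reCLM_apply, hmean] at hre_int
  have h2 : (∫ θ in (0:ℝ)..(2*Real.pi),
      (Real.log (dist (c + (R:ℂ) * Complex.exp (θ * Complex.I)) a) - Real.log (dist c a))) = 0 := by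
    rw [show (∫ θ in (0:ℝ)..(2*Real.pi),
        (Real.log (dist (c + (R:ℂ) * Complex.exp (θ * Complex.I)) a) - Real.log (dist c a)))
        = ∫ θ in (0:ℝ)..(2*Real.pi), (f (c + (R:ℂ) * Complex.exp (θ * Complex.I))).re from
      intervalIntegral.integral_congr fun θ _ => (h1 θ).symm, hre_int]
    simp [Complex.mul_re, hfc]
  have hGeq : (fun θ : ℝ => Real.log (dist (c + (R:ℂ) * Complex.exp (θ * Complex.I)) a))
      = fun θ : ℝ => (f (c + (R:ℂ) * Complex.exp (θ * Complex.I))).re + Real.log (dist c a) := by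
    funext θ; rw [h1 θ]; ring
  have hGcont : Continuous fun θ : ℝ =>
      Real.log (dist (c + (R:ℂ) * Complex.exp (θ * Complex.I)) a) := by
    rw [hGeq]
    exact (Complex.continuous_re.comp hcont).add continuous_const
  have h3 := intervalIntegral.integral_sub
    (hGcont.intervalIntegrable (0:ℝ) (2*Real.pi))
    (intervalIntegrable_const (c := Real.log (dist c a)) (μ := MeasureTheory.volume)
      (a := (0:ℝ)) (b := 2*Real.pi))
  rw [h3, intervalIntegral.integral_const, sub_eq_zero] at h2
  rw [h2]
  simp [smul_eq_mul]

/-- A real function is harmonic on an open set `s ⊆ ℂ` iff it is continuous on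
`s` and satisfies the circle mean-value property on every closed disc
contained in `s`. -/
def HarmonicOn (u : ℂ → ℝ) (s : Set ℂ) : Prop :=
  ContinuousOn u s ∧ ∀ c : ℂ, ∀ ρ : ℝ, 0 < ρ → closedBall c ρ ⊆ s →
    u c = (1 / (2 * Real.pi)) *
      ∫ θ in (0 : ℝ)..(2 * Real.pi), u (c + ρ * Complex.exp (θ * Complex.I))

/-- The family `F_{a,r}` of competitors for the harmonic measure of
`∂D(a,r) ∩ Ω` in `Ω ∩ D(a,r)`. -/
def MemF (Ω : Set ℂ) (a : ℂ) (r : ℝ) (u : ℂ → ℝ) : Prop :=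
  HarmonicOn u (Ω ∩ ball a r) ∧
  (∀ z ∈ Ω ∩ ball a r, u z ≤ 1) ∧
  (∀ ζ ∈ frontier Ω ∩ ball a r,
    Filter.limsup u (nhdsWithin ζ (Ω ∩ ball a r)) ≤ 0)

/-- A set `E ⊆ ℂ` satisfies condition `(U)_{1,α}`. -/
def CondU1 (E : Set ℂ) (α : ℝ) : Prop :=
  ∃ C > (0 : ℝ), ∃ r₀ > (0 : ℝ), ∀ a ∈ E, ∀ r ∈ Set.Ioo (0 : ℝ) r₀,
    ({z : ℂ | C * r ^ α ≤ dist z a ∧ dist z a ≤ r} ∩ E).Nonempty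

lemma harmonicOn_log_aux (a : ℂ) (s : Set ℂ) (ha : a ∉ s) (K L : ℝ) :
    HarmonicOn (fun z => (Real.log (dist z a) - K) / L) s := by
  constructor
  · intro z hz
    have hz0 : dist z a ≠ 0 := by
      simp only [dist_ne_zero]; rintro rfl; exact ha hz
    apply ContinuousAt.continuousWithinAt
    have hd : Continuous fun z : ℂ => dist z a := by fun_prop
    exact ((ContinuousAt.comp (g := Real.log) (f := fun z : ℂ => dist z a)
      (Real.continuousAt_log hz0) hd.continuousAt).sub continuousAt_const).div_const L
  · intro c ρ hρ hsub
    have hlt : ρ < dist c a := by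
      by_contra hle
      exact ha (hsub (by simpa [mem_closedBall, dist_comm] using not_lt.mp hle))
    have hmean := circle_mean_log_dist hρ hlt
    have hGcont : Continuous fun θ : ℝ =>
        Real.log (dist (c + (ρ:ℂ) * Complex.exp (θ * Complex.I)) a) := by
      apply continuous_iff_continuousAt.mpr
      intro θ
      have hpt : dist (c + (ρ:ℂ) * Complex.exp (θ * Complex.I)) a ≠ 0 := by
        simp only [dist_ne_zero]
        intro h0
        apply ha
        apply hsub
        rw [← h0]
        simp only [mem_closedBall, Complex.dist_eq, add_sub_cancel_left, map_mul, norm_mul,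
          Complex.norm_exp_ofReal_mul_I, mul_one, Complex.norm_real, Real.norm_eq_abs, abs_of_pos hρ, le_refl]
      have hd : Continuous fun θ : ℝ => dist (c + (ρ:ℂ) * Complex.exp (θ * Complex.I)) a := by
        fun_prop
      exact ContinuousAt.comp (g := Real.log)
        (f := fun θ : ℝ => dist (c + (ρ:ℂ) * Complex.exp (θ * Complex.I)) a)
        (Real.continuousAt_log hpt) hd.continuousAt
    rw [intervalIntegral.integral_div]
    rw [intervalIntegral.integral_sub (hGcont.intervalIntegrable _ _)
      (intervalIntegrable_const), hmean, intervalIntegral.integral_const]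
    have hπ : (2 * Real.pi) ≠ 0 := by positivity
    rw [smul_eq_mul, sub_zero]
    rcases eq_or_ne L 0 with hL | hL
    · simp [hL]
    · field_simp

lemma memF_log (Ω : Set ℂ) (hopen : IsOpen Ω) (a : ℂ) (ha : a ∈ frontier Ω)
    {r ρ : ℝ} (hρ : 0 < ρ) (hρr : ρ < r)
    (hann : ∀ ζ ∈ frontier Ω, dist ζ a ≤ r → dist ζ a < ρ) :
    MemF Ω a r (fun z => (Real.log (dist z a) - Real.log ρ) /
      (Real.log r - Real.log ρ)) := by
  have haΩ : a ∉ Ω := by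
    rw [hopen.frontier_eq] at ha; exact ha.2
  have hacl : a ∈ closure Ω := by
    rw [hopen.frontier_eq] at ha; exact ha.1
  set L : ℝ := Real.log r - Real.log ρ with hLdef
  have hL : 0 < L := sub_pos.mpr (Real.log_lt_log hρ hρr)
  refine ⟨harmonicOn_log_aux a (Ω ∩ ball a r) (fun h => haΩ h.1) _ _, ?_, ?_⟩
  · rintro z ⟨hzΩ, hzb⟩
    rw [div_le_one hL]
    have hz0 : 0 < dist z a := dist_pos.mpr (fun h => haΩ (h ▸ hzΩ))
    have : Real.log (dist z a) ≤ Real.log r :=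
      Real.log_le_log (by positivity) (le_of_lt (mem_ball.mp hzb))
    linarith
  · rintro ζ ⟨hζf, hζb⟩
    have hζρ : dist ζ a < ρ := hann ζ hζf (le_of_lt (mem_ball.mp hζb))
    have hev : ∀ᶠ z in nhdsWithin ζ (Ω ∩ ball a r),
        (fun z => (Real.log (dist z a) - Real.log ρ) / L) z ≤ 0 := by
      have hball : ball ζ (ρ - dist ζ a) ∈ nhdsWithin ζ (Ω ∩ ball a r) :=
        nhdsWithin_le_nhds (ball_mem_nhds ζ (by linarith))
      filter_upwards [hball, self_mem_nhdsWithin] with z hz hzm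
      have hz0 : 0 < dist z a := dist_pos.mpr (fun h => haΩ (h ▸ hzm.1))
      have hzρ : dist z a < ρ := by
        have := dist_triangle z ζ a
        have hzζ : dist z ζ < ρ - dist ζ a := mem_ball.mp hz
        linarith
      have : Real.log (dist z a) ≤ Real.log ρ := Real.log_le_log hz0 hzρ.le
      exact div_nonpos_iff.mpr (Or.inr ⟨by linarith, hL.le⟩)
    rw [Filter.limsup_eq]
    by_cases hbdd : BddBelow {x : ℝ | ∀ᶠ n in nhdsWithin ζ (Ω ∩ ball a r),
        (Real.log (dist n a) - Real.log ρ) / L ≤ x}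
    · exact csInf_le hbdd hev
    · rw [Real.sInf_of_not_bddBelow hbdd]

/-- If `Ω` satisfies `(Δ)_{1,α}` for some `α > 1`, then `∂Ω` satisfies
`(U)_{1,α′}` for some `α′ > α`. -/
theorem stmt_11 (Ω : Set ℂ) (hopen : IsOpen Ω) (hconn : IsConnected Ω)
    (hbd : (frontier Ω).Nonempty) (hdiam : 0 < EMetric.diam Ω)
    (α ε C r₀ : ℝ) (hα : 1 < α) (hε : ε ∈ Set.Ioo (0 : ℝ) 1)
    (hC : 0 < C) (hr₀ : 0 < r₀)
    (hΔ : ∀ a ∈ frontier Ω, ∀ r ∈ Set.Ioo (0 : ℝ) r₀, ∀ u : ℂ → ℝ,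
      MemF Ω a r u → ∀ z ∈ Ω, dist z a = C * r ^ α → u z ≤ 1 - ε) :
    ∃ α' > α, CondU1 (frontier Ω) α' := by
  obtain ⟨hεpos, hε1⟩ := hε
  set α' : ℝ := (α - 1 + ε) / ε with hα'def
  have hα' : α < α' := by
    rw [lt_div_iff₀ hεpos]
    nlinarith [mul_pos (sub_pos.2 hα) (sub_pos.2 hε1)]
  set C' : ℝ := C ^ (1/ε : ℝ) / 2 with hC'def
  have hC' : 0 < C' := by
    have := Real.rpow_pos_of_pos hC (1/ε)
    positivity
  -- two points of Ω far apart
  obtain ⟨x, hxΩ, y, hyΩ, hxy⟩ := EMetric.diam_pos_iff'.mp hdiam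
  set d : ℝ := dist x y with hddef
  have hd : 0 < d := dist_pos.mpr hxy
  -- eventually conditions on r
  have hev : ∀ᶠ r in nhdsWithin 0 (Set.Ioi (0:ℝ)),
      C' * r ^ α' < C * r ^ α ∧ C * r ^ α < r := by
    have h1 : Filter.Tendsto (fun r : ℝ => C' * r ^ (α' - α)) (nhdsWithin 0 (Set.Ioi 0))
        (nhds 0) := by
      have h0 : Filter.Tendsto (fun r : ℝ => r ^ (α' - α)) (nhdsWithin 0 (Set.Ioi 0))
          (nhds ((0:ℝ) ^ (α' - α))) :=
        Filter.Tendsto.mono_left (Real.continuousAt_rpow_const 0 (α' - α)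
          (Or.inr (by linarith))).tendsto nhdsWithin_le_nhds
      rw [Real.zero_rpow (by linarith : α' - α ≠ 0)] at h0
      simpa using h0.const_mul C'
    have h2 : Filter.Tendsto (fun r : ℝ => C * r ^ (α - 1)) (nhdsWithin 0 (Set.Ioi 0))
        (nhds 0) := by
      have h0 : Filter.Tendsto (fun r : ℝ => r ^ (α - 1)) (nhdsWithin 0 (Set.Ioi 0))
          (nhds ((0:ℝ) ^ (α - 1))) :=
        Filter.Tendsto.mono_left (Real.continuousAt_rpow_const 0 (α - 1)
          (Or.inr (by linarith))).tendsto nhdsWithin_le_nhds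
      rw [Real.zero_rpow (by linarith : α - 1 ≠ 0)] at h0
      simpa using h0.const_mul C
    have e1 : ∀ᶠ r in nhdsWithin 0 (Set.Ioi (0:ℝ)), C' * r ^ (α' - α) < C :=
      h1.eventually_lt_const hC
    have e2 : ∀ᶠ r in nhdsWithin 0 (Set.Ioi (0:ℝ)), C * r ^ (α - 1) < 1 :=
      h2.eventually_lt_const one_pos
    filter_upwards [e1, e2, self_mem_nhdsWithin] with r he1 he2 hrpos
    have hrpos' : (0:ℝ) < r := hrpos
    constructor
    · have : r ^ α' = r ^ (α' - α) * r ^ α := by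
        rw [← Real.rpow_add hrpos']; ring_nf
      rw [this, ← mul_assoc]
      exact mul_lt_mul_of_pos_right he1 (Real.rpow_pos_of_pos hrpos' α)
    · have : r ^ α = r ^ (α - 1) * r := by
        rw [← Real.rpow_add_one hrpos'.ne']; ring_nf
      rw [this, ← mul_assoc]
      calc C * r ^ (α - 1) * r < 1 * r := mul_lt_mul_of_pos_right he2 hrpos'
        _ = r := one_mul r
  obtain ⟨r₂, hr₂, hsub⟩ := mem_nhdsGT_iff_exists_Ioo_subset.mp hev
  set r₁ : ℝ := min r₀ (min (d/2) r₂) with hr₁def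
  have hr₁ : 0 < r₁ := lt_min hr₀ (lt_min (by linarith) hr₂)
  refine ⟨α', hα', C', hC', r₁, hr₁, ?_⟩
  rintro a ha r ⟨hr0, hrr₁⟩
  by_contra hne
  rw [Set.not_nonempty_iff_eq_empty] at hne
  have hrr₀ : r < r₀ := lt_of_lt_of_le hrr₁ (min_le_left _ _)
  have hrd : r < d / 2 := lt_of_lt_of_le hrr₁ (le_trans (min_le_right _ _) (min_le_left _ _))
  have hrr₂ : r < r₂ := lt_of_lt_of_le hrr₁ (le_trans (min_le_right _ _) (min_le_right _ _))
  obtain ⟨hρt, htr⟩ := hsub ⟨hr0, hrr₂⟩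
  set ρ : ℝ := C' * r ^ α' with hρdef
  set t : ℝ := C * r ^ α with htdef
  have hρpos : 0 < ρ := mul_pos hC' (Real.rpow_pos_of_pos hr0 α')
  have htpos : 0 < t := mul_pos hC (Real.rpow_pos_of_pos hr0 α)
  have haΩ : a ∉ Ω := by rw [hopen.frontier_eq] at ha; exact ha.2
  have hacl : a ∈ closure Ω := by rw [hopen.frontier_eq] at ha; exact ha.1
  -- the annulus misses the frontier
  have hann : ∀ ζ ∈ frontier Ω, dist ζ a ≤ r → dist ζ a < ρ := by
    intro ζ hζ hζr
    by_contra hge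
    have : ζ ∈ ({z : ℂ | ρ ≤ dist z a ∧ dist z a ≤ r} ∩ frontier Ω) :=
      ⟨⟨not_lt.mp hge, hζr⟩, hζ⟩
    rw [hne] at this
    exact this
  -- find a point of Ω on the sphere of radius t
  have hz0 : ∃ z₀ ∈ Ω, dist z₀ a = t := by
    have hin : (Ω ∩ ball a t).Nonempty := by
      obtain ⟨z, hz1, hz2⟩ := Metric.mem_closure_iff.mp hacl t htpos
      exact ⟨z, hz1, by rwa [mem_ball, dist_comm]⟩
    have hout : (Ω ∩ (closedBall a t)ᶜ).Nonempty := by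
      by_contra hemp
      rw [Set.not_nonempty_iff_eq_empty] at hemp
      have hx' : dist x a ≤ t := by
        by_contra h'
        exact absurd hemp (Set.nonempty_iff_ne_empty.mp ⟨x, hxΩ, fun hm =>
          h' (mem_closedBall.mp hm)⟩)
      have hy' : dist y a ≤ t := by
        by_contra h'
        exact absurd hemp (Set.nonempty_iff_ne_empty.mp ⟨y, hyΩ, fun hm =>
          h' (mem_closedBall.mp hm)⟩)
      have : d ≤ dist x a + dist a y := dist_triangle x a y
      rw [dist_comm a y] at this
      have : d ≤ 2 * t := by linarith
      linarith [htr, hrd]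
    by_contra hnos
    push_neg at hnos
    have hcover : Ω ⊆ ball a t ∪ (closedBall a t)ᶜ := by
      intro z hz
      rcases lt_trichotomy (dist z a) t with h | h | h
      · exact Or.inl (mem_ball.mpr h)
      · exact absurd h (hnos z hz)
      · exact Or.inr (fun hm => absurd (mem_closedBall.mp hm) (not_le.mpr h))
    obtain ⟨z, hzΩ, hz1, hz2⟩ := hconn.isPreconnected (ball a t) (closedBall a t)ᶜ
      isOpen_ball Metric.isClosed_closedBall.isOpen_compl hcover hin hout
    exact hz2 (mem_closedBall.mpr (le_of_lt (mem_ball.mp hz1)))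
  obtain ⟨z₀, hz₀Ω, hz₀d⟩ := hz0
  -- the competitor
  have hmem := memF_log Ω hopen a ha hρpos (lt_trans hρt htr) hann
  have hle := hΔ a ha r ⟨hr0, hrr₀⟩ _ hmem z₀ hz₀Ω hz₀d
  -- but the value is too big
  set L : ℝ := Real.log r - Real.log ρ with hLdef
  have hL : 0 < L := sub_pos.mpr (Real.log_lt_log hρpos (lt_trans hρt htr))
  rw [hz₀d] at hle
  have hlogρ : Real.log ρ = (1/ε) * Real.log C - Real.log 2 + α' * Real.log r := by
    rw [hρdef, Real.log_mul hC'.ne' (Real.rpow_pos_of_pos hr0 α').ne',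
      Real.log_rpow hr0, hC'def,
      Real.log_div (Real.rpow_pos_of_pos hC (1/ε)).ne' two_ne_zero,
      Real.log_rpow hC]
  have hlogt : Real.log t = Real.log C + α * Real.log r := by
    rw [htdef, Real.log_mul hC.ne' (Real.rpow_pos_of_pos hr0 α).ne', Real.log_rpow hr0]
  have hkey : (Real.log t - Real.log ρ) - (1 - ε) * L = ε * Real.log 2 := by
    rw [hLdef, hlogρ, hlogt, hα'def]
    field_simp
    ring
  have hgt : 1 - ε < (Real.log t - Real.log ρ) / L := by
    rw [lt_div_iff₀ hL]
    have h2 : 0 < ε * Real.log 2 := mul_pos hεpos (Real.log_pos one_lt_two)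
    linarith
  linarith
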